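/- Let (X,d) be a compact metric space and μ a Borel probability measure on X satisfying the thin annuli condition (M.2) with constants α_0, ρ_0 > 0. Let α ∈ (0,1], let ε > 0, and let r : X → ℝ be Lipschitz with Lipschitz constant ≤ 1 and 0 < ε ≤ r(x) ≤ ρ_0 for all x ∈ supp μ. Then there exists an α-Hölder continuous function g : X × X → [0,1] (with respect to the max product metric) and a constant C depending only on (X,d,μ,α) such that: ‖g‖_α ≤ C/ε; 1_{B(x,r(x))}(y) ≤ g(x,y) ≤ 1_{B(x,r(x)+ε)}(y) for all x,y ∈ X; and | ∫_X g(x,y) dμ(y) − μ(B(x,r(x))) | ≤ C ε^{α_0} for all x ∈ supp μ. Alternatively, g may instead be chosen so that 1_{B(x,r(x)−ε)}(y) ≤ g(x,y) ≤ 1_{B(x,r(x))}(y) for all x,y ∈ X, with the same two other properties. -/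

import Mathlib

open MeasureTheory Metric Filter Set Asymptotics ProbabilityTheory
open scoped ENNReal NNReal Topology

noncomputable section

namespace Paper

variable {Y : Type*} [MetricSpace Y]

/-- The sup norm of a real-valued function. -/
def supNorm (f : Y → ℝ) : ℝ := ⨆ x, |f x|

/-- The `α`-Hölder seminorm (Hölder constant) `H_α(f)`. -/
def holderSemi (α : ℝ) (f : Y → ℝ) : ℝ :=
  sSup {c : ℝ | ∃ x y : Y, x ≠ y ∧ c = |f x - f y| / dist x y ^ α}

/-- The `α`-Hölder norm `‖f‖_α = sup|f| + H_α(f)`. -/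
def holderNorm (α : ℝ) (f : Y → ℝ) : ℝ := supNorm f + holderSemi α f

/-- `f` is `α`-Hölder continuous. -/
def IsHolderF (α : ℝ) (f : Y → ℝ) : Prop :=
  ∃ H : ℝ, 0 ≤ H ∧ ∀ x y, |f x - f y| ≤ H * dist x y ^ α

/-- Real-valued indicator function of a set. -/
def indic (A : Set Y) (x : Y) : ℝ := A.indicator (fun _ => (1 : ℝ)) x

/-- Condition (S_{γ,υ}): `a` takes values in `(0,1]`, is monotone decreasing, and
`c n^{-γ} ≤ a n ≤ C (log n)^{-υ}` for all `n ≥ 2`. -/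
def CondS (γ υ : ℝ) (a : ℕ → ℝ) : Prop :=
  (∀ n, 0 < a n ∧ a n ≤ 1) ∧ (∀ m n : ℕ, m ≤ n → a n ≤ a m) ∧
    ∃ c C : ℝ, 0 < c ∧ 0 < C ∧ ∀ n : ℕ, 2 ≤ n →
      c * (n : ℝ) ^ (-γ) ≤ a n ∧ a n ≤ C * Real.log n ^ (-υ)

/-- The standard normal cumulative distribution function `Φ`. -/
def stdNormalCDF (t : ℝ) : ℝ :=
  (Real.sqrt (2 * Real.pi))⁻¹ * ∫ s in Set.Iic t, Real.exp (-(s ^ 2) / 2)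

variable [MeasurableSpace Y]

/-- Covariance of two observables. -/
def cov (μ : Measure Y) (f g : Y → ℝ) : ℝ :=
  (∫ x, f x * g x ∂μ) - (∫ x, f x ∂μ) * ∫ x, g x ∂μ

/-- Variance of an observable. -/
def var (μ : Measure Y) (f : Y → ℝ) : ℝ :=
  (∫ x, f x ^ 2 ∂μ) - (∫ x, f x ∂μ) ^ 2

/-- The (topological) support of a measure: points whose every ball has positive measure. -/
def measSupport (μ : Measure Y) : Set Y := {x | ∀ r : ℝ, 0 < r → 0 < μ (ball x r)}

/-- Condition (M.1) (Frostman property) with exponent `s₀`. -/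
def CondM1With (μ : Measure Y) (s₀ : ℝ) : Prop :=
  0 < s₀ ∧ ∃ C : ℝ, 0 < C ∧
    ∀ (x : Y) (r : ℝ), 0 < r → μ (ball x r) ≤ ENNReal.ofReal (C * r ^ s₀)

/-- Condition (M.1). -/
def CondM1 (μ : Measure Y) : Prop := ∃ s₀ : ℝ, CondM1With μ s₀

/-- Condition (M.2) (thin annuli) with constants `α₀`, `ρ₀`. -/
def CondM2With (μ : Measure Y) (α₀ ρ₀ : ℝ) : Prop :=
  0 < α₀ ∧ 0 < ρ₀ ∧ ∃ C : ℝ, 0 < C ∧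
    ∀ (x : Y) (ε r : ℝ), 0 < ε → ε ≤ r → r ≤ ρ₀ →
      μ (ball x (r + ε) \ ball x r) ≤ ENNReal.ofReal (C * ε ^ α₀)

/-- Condition (M.2). -/
def CondM2 (μ : Measure Y) : Prop := ∃ α₀ ρ₀ : ℝ, CondM2With μ α₀ ρ₀

/-- Condition (D.2) (decay of correlations) with a fixed decay rate `τ₀`. -/
def CondD2Rate (T : Y → Y) (μ : Measure Y) (τ₀ : ℝ) : Prop :=
  ∀ α : ℝ, α ∈ Set.Ioc (0 : ℝ) 1 → ∃ C : ℝ, 0 < C ∧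
    ∀ (n : ℕ) (φ ψ : Y → ℝ), IsHolderF α φ → IsHolderF α ψ →
      |cov μ φ (fun x => ψ (T^[n] x))| ≤
        C * holderNorm α φ * holderNorm α ψ * Real.exp (-τ₀ * n)

/-- Condition (D.2) (decay of correlations for Hölder observables). -/
def CondD2 (T : Y → Y) (μ : Measure Y) : Prop :=
  ∀ α : ℝ, α ∈ Set.Ioc (0 : ℝ) 1 → ∃ C τ₀ : ℝ, 0 < C ∧ 0 < τ₀ ∧
    ∀ (n : ℕ) (φ ψ : Y → ℝ), IsHolderF α φ → IsHolderF α ψ →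
      |cov μ φ (fun x => ψ (T^[n] x))| ≤
        C * holderNorm α φ * holderNorm α ψ * Real.exp (-τ₀ * n)

/-- The multiple-decorrelation inequality for families of Hölder observables, with
constant `r`, rate `τ` and polynomial `P`. -/
def MultiDecorrBound (T : Y → Y) (μ : Measure Y) (α r τ : ℝ) (P : Polynomial ℝ) : Prop :=
  ∀ (m m' : ℕ) (φ : Fin (m + 1) → Y → ℝ) (ψ : Fin (m' + 1) → Y → ℝ),
    (∀ i, IsHolderF α (φ i)) → (∀ j, IsHolderF α (ψ j)) →
    ∀ (k : Fin (m + 1) → ℕ) (l : Fin (m' + 1) → ℕ), Monotone k → Monotone l → ∀ N : ℕ,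
      cov μ (fun x => ∏ i, φ i (T^[k i] x)) (fun x => ∏ j, ψ j (T^[N + l j] x)) ≤
        ((∏ i, supNorm (φ i)) * ∏ j, supNorm (ψ j)
            + (∑ i, holderSemi α (φ i) *
                ((∏ i' ∈ Finset.univ.erase i, supNorm (φ i')) * ∏ j, supNorm (ψ j)))
            + ∑ j, holderSemi α (ψ j) *
                ((∏ i, supNorm (φ i)) * ∏ j' ∈ Finset.univ.erase j, supNorm (ψ j'))) *
          P.eval ((l (Fin.last m') : ℕ) : ℝ) *
          Real.exp (-τ * ((N : ℝ) - r * ((k (Fin.last m) : ℕ) : ℝ)))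

/-- Condition (D.3) (multiple decorrelation property). -/
def CondD3 (T : Y → Y) (μ : Measure Y) : Prop :=
  ∀ α : ℝ, α ∈ Set.Ioc (0 : ℝ) 1 →
    ∃ (r τ : ℝ) (P : Polynomial ℝ), 1 ≤ r ∧ 0 < τ ∧ (∀ i, 0 ≤ P.coeff i) ∧
      MultiDecorrBound T μ α r τ P

/-- `Pop` is (a version of) the transfer operator of `(X,T,μ)`. -/
def IsTransferOperator (T : Y → Y) (μ : Measure Y) (Pop : (Y → ℝ) → Y → ℝ) : Prop :=
  ∀ φ ψ : Y → ℝ, MemLp φ 2 μ → MemLp ψ 2 μ →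
    (∫ x, φ x * ψ (T x) ∂μ) = ∫ x, Pop φ x * ψ x ∂μ

/-- Condition (D.1): the transfer operator contracts Hölder norms of mean-zero
Hölder observables exponentially fast. -/
def CondD1 (μ : Measure Y) (Pop : (Y → ℝ) → Y → ℝ) : Prop :=
  ∀ α : ℝ, α ∈ Set.Ioc (0 : ℝ) 1 → ∃ C τ₀ : ℝ, 0 < C ∧ 0 < τ₀ ∧
    ∀ (n : ℕ) (φ : Y → ℝ), IsHolderF α φ → (∫ x, φ x ∂μ) = 0 →
      IsHolderF α (Pop^[n] φ) ∧
      holderNorm α (Pop^[n] φ) ≤ C * holderNorm α φ * Real.exp (-τ₀ * n)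




lemma measSupport_nonempty' {X : Type*} [MetricSpace X] [CompactSpace X] [Nonempty X]
    [MeasurableSpace X] [BorelSpace X] (μ : Measure X) [IsProbabilityMeasure μ] :
    (measSupport μ).Nonempty := by
  by_contra h
  have h' : ∀ x : X, ∃ rx : ℝ, 0 < rx ∧ μ (ball x rx) = 0 := by
    intro x
    have hx : x ∉ measSupport μ := fun hx => h ⟨x, hx⟩
    simp only [measSupport, Set.mem_setOf_eq, not_forall] at hx
    obtain ⟨rx, hrx, hμ⟩ := hx
    exact ⟨rx, hrx, by simpa using (not_lt.mp hμ)⟩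
  choose rad hrad hnull using h'
  obtain ⟨t, ht⟩ := isCompact_univ.elim_finite_subcover (fun x : X => ball x (rad x))
    (fun x => isOpen_ball) (fun x _ => Set.mem_iUnion.mpr ⟨x, mem_ball_self (hrad x)⟩)
  have hle : μ Set.univ ≤ ∑ x ∈ t, μ (ball x (rad x)) :=
    le_trans (measure_mono ht) (measure_biUnion_finset_le t _)
  simp only [hnull, Finset.sum_const_zero, nonpos_iff_eq_zero, measure_univ] at hle
  exact one_ne_zero hle

/-- Key measure lemma: annulus just inside radius `r`. -/
lemma annulus_inner_bound {X : Type*} [MetricSpace X] [MeasurableSpace X] [BorelSpace X]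
    (μ : Measure X) (α₀ ρ₀ : ℝ) (hM2 : CondM2With μ α₀ ρ₀) :
    ∃ C : ℝ, 0 < C ∧ ∀ (x : X) (ε r : ℝ), 0 < ε → ε ≤ r → r ≤ ρ₀ →
      μ (ball x r \ closedBall x (r - ε)) ≤ ENNReal.ofReal (C * ε ^ α₀) := by
  obtain ⟨hα₀, hρ₀, C₂, hC₂, h2⟩ := hM2
  set q : ℝ := (1/2 : ℝ) ^ α₀ with hq
  have hq0 : 0 < q := Real.rpow_pos_of_pos (by norm_num) _
  have hq1 : q < 1 := by
    have := Real.rpow_lt_one (by norm_num : (0:ℝ) ≤ 1/2) (by norm_num) hα₀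
    simpa [hq] using this
  have h1q : (0:ℝ) < 1 - q := by linarith
  have h2α : (0:ℝ) < (2:ℝ) ^ α₀ := Real.rpow_pos_of_pos (by norm_num) _
  have hCpos : 0 < C₂ * (1 + (2:ℝ) ^ α₀ / (1 - q)) := by
    have := div_pos h2α h1q
    nlinarith
  refine ⟨C₂ * (1 + (2:ℝ) ^ α₀ / (1 - q)), hCpos, ?_⟩
  intro x ε r hε hεr hrρ
  have hr0 : 0 < r := lt_of_lt_of_le hε hεr
  have hεα : (0:ℝ) ≤ ε ^ α₀ := Real.rpow_nonneg hε.le _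
  by_cases hcase : 2 * ε ≤ r
  · -- direct application of (M.2)
    have hsub : ball x r \ closedBall x (r - ε) ⊆ ball x ((r - ε) + ε) \ ball x (r - ε) := by
      intro y hy
      refine ⟨by simpa [sub_add_cancel] using hy.1, fun hy' => hy.2 (ball_subset_closedBall hy')⟩
    calc μ (ball x r \ closedBall x (r - ε)) ≤ μ (ball x ((r - ε) + ε) \ ball x (r - ε)) :=
          measure_mono hsub
      _ ≤ ENNReal.ofReal (C₂ * ε ^ α₀) := h2 x ε (r - ε) hε (by linarith) (by linarith)
      _ ≤ _ := by
          apply ENNReal.ofReal_le_ofReal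
          have hd : (0:ℝ) ≤ (2:ℝ) ^ α₀ / (1 - q) := div_nonneg h2α.le h1q.le
          nlinarith [mul_nonneg (mul_nonneg hC₂.le hd) hεα]
  · -- dyadic chaining
    push_neg at hcase
    have hsub : ball x r \ closedBall x (r - ε) ⊆
        ⋃ k : ℕ, (ball x (r / 2 ^ k) \ ball x (r / 2 ^ (k + 1))) := by
      intro y hy
      have hd0 : 0 < dist y x := by
        by_contra hd
        push_neg at hd
        exact hy.2 (mem_closedBall.mpr (by linarith [dist_nonneg (x := y) (y := x)]))
      have hdr : dist y x < r := mem_ball.mp hy.1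
      have hex : ∃ n : ℕ, r / 2 ^ (n + 1) ≤ dist y x := by
        obtain ⟨n, hn⟩ := exists_pow_lt_of_lt_one (div_pos hd0 hr0) (by norm_num : (1/2:ℝ) < 1)
        refine ⟨n, ?_⟩
        have h3 : r * (1/2:ℝ) ^ n < dist y x := by
          have := mul_lt_mul_of_pos_left hn hr0
          rwa [mul_comm r (dist y x / r), div_mul_cancel₀ _ hr0.ne'] at this
        have h4 : r / 2 ^ (n+1) ≤ r * (1/2:ℝ) ^ n := by
          have heq : r / 2 ^ (n+1) = r * (1/2:ℝ) ^ (n+1) := by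
            rw [one_div, inv_pow, div_eq_mul_inv]
          rw [heq]
          have hle : ((1:ℝ)/2) ^ (n+1) ≤ (1/2:ℝ) ^ n :=
            pow_le_pow_of_le_one (by norm_num) (by norm_num) (Nat.le_succ n)
          exact mul_le_mul_of_nonneg_left hle hr0.le
        linarith
      have hk1 : r / 2 ^ (Nat.find hex + 1) ≤ dist y x := Nat.find_spec hex
      have hk2 : dist y x < r / 2 ^ (Nat.find hex) := by
        rcases Nat.eq_zero_or_pos (Nat.find hex) with h0 | h0
        · rw [h0]; simpa using hdr
        · have hlt : Nat.find hex - 1 < Nat.find hex := by omega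
          have hmin := Nat.find_min hex hlt
          push_neg at hmin
          have : Nat.find hex - 1 + 1 = Nat.find hex := by omega
          rwa [this] at hmin
      exact Set.mem_iUnion.mpr ⟨Nat.find hex, mem_ball.mpr hk2,
        fun hb => absurd (mem_ball.mp hb) (not_lt.mpr hk1)⟩
    have hterm : ∀ k : ℕ, μ (ball x (r / 2 ^ k) \ ball x (r / 2 ^ (k + 1))) ≤
        ENNReal.ofReal (C₂ * r ^ α₀) * (ENNReal.ofReal q) ^ (k + 1) := by
      intro k
      have hs0 : 0 < r / 2 ^ (k+1) := by positivity
      have hsum : r / 2 ^ k = r / 2 ^ (k+1) + r / 2 ^ (k+1) := by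
        rw [pow_succ]; ring
      have hsρ : r / 2 ^ (k+1) ≤ ρ₀ :=
        le_trans (div_le_self hr0.le (one_le_pow₀ (by norm_num))) hrρ
      have hann := h2 x (r / 2 ^ (k+1)) (r / 2 ^ (k+1)) hs0 le_rfl hsρ
      rw [← hsum] at hann
      refine le_trans hann ?_
      have heq : C₂ * (r / 2 ^ (k+1)) ^ α₀ = (C₂ * r ^ α₀) * q ^ (k + 1) := by
        have hrw : (r / 2 ^ (k+1) : ℝ) = r * (1/2 : ℝ) ^ (k+1) := by
          rw [one_div, inv_pow]; ring
        rw [hrw, Real.mul_rpow hr0.le (by positivity), hq,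
          ← Real.rpow_natCast (1/2 : ℝ) (k+1), ← Real.rpow_mul (by norm_num),
          mul_comm (((k+1 : ℕ) : ℝ)) α₀, Real.rpow_mul (by norm_num), Real.rpow_natCast]
        ring
      rw [heq, ENNReal.ofReal_mul (by positivity), ENNReal.ofReal_pow hq0.le]
    calc μ (ball x r \ closedBall x (r - ε))
        ≤ ∑' k : ℕ, μ (ball x (r / 2 ^ k) \ ball x (r / 2 ^ (k + 1))) :=
          le_trans (measure_mono hsub) (measure_iUnion_le _)
      _ ≤ ∑' k : ℕ, ENNReal.ofReal (C₂ * r ^ α₀) * (ENNReal.ofReal q) ^ (k + 1) :=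
          ENNReal.tsum_le_tsum hterm
      _ = ENNReal.ofReal (C₂ * r ^ α₀) * (ENNReal.ofReal q * (1 - ENNReal.ofReal q)⁻¹) := by
          rw [ENNReal.tsum_mul_left]
          congr 1
          simp only [pow_succ']
          rw [ENNReal.tsum_mul_left, ENNReal.tsum_geometric]
      _ ≤ ENNReal.ofReal (C₂ * r ^ α₀) * ENNReal.ofReal (q * (1 - q)⁻¹) := by
          gcongr
          rw [ENNReal.ofReal_mul hq0.le]
          gcongr
          have hone : (1 : ℝ≥0∞) - ENNReal.ofReal q = ENNReal.ofReal (1 - q) := by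
            rw [ENNReal.ofReal_sub _ hq0.le, ENNReal.ofReal_one]
          rw [hone, ← ENNReal.ofReal_inv_of_pos h1q]
      _ ≤ ENNReal.ofReal (C₂ * (1 + (2:ℝ) ^ α₀ / (1 - q)) * ε ^ α₀) := by
          rw [← ENNReal.ofReal_mul (by positivity)]
          apply ENNReal.ofReal_le_ofReal
          have hrε : r ^ α₀ ≤ (2:ℝ) ^ α₀ * ε ^ α₀ := by
            rw [← Real.mul_rpow (by norm_num) hε.le]
            exact Real.rpow_le_rpow hr0.le (by linarith) hα₀.le
          have hqle : q * (1 - q)⁻¹ ≤ (1 - q)⁻¹ := by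
            nlinarith [inv_nonneg.mpr h1q.le]
          have hinv : (0:ℝ) ≤ (1 - q)⁻¹ := inv_nonneg.mpr h1q.le
          calc C₂ * r ^ α₀ * (q * (1 - q)⁻¹)
              ≤ C₂ * r ^ α₀ * (1 - q)⁻¹ :=
                mul_le_mul_of_nonneg_left hqle (mul_nonneg hC₂.le (Real.rpow_nonneg hr0.le _))
            _ ≤ C₂ * ((2:ℝ) ^ α₀ * ε ^ α₀) * (1 - q)⁻¹ := by
                apply mul_le_mul_of_nonneg_right _ hinv
                exact mul_le_mul_of_nonneg_left hrε hC₂.le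
            _ ≤ C₂ * (1 + (2:ℝ) ^ α₀ / (1 - q)) * ε ^ α₀ := by
                rw [div_eq_mul_inv]
                nlinarith [mul_nonneg hC₂.le hεα]


/-- **Lemma (Hölder approximation of indicator functions of balls).** -/
theorem holder_approximation_of_balls
    {X : Type*} [MetricSpace X] [CompactSpace X] [Nonempty X]
    [MeasurableSpace X] [BorelSpace X]
    (μ : Measure X) [IsProbabilityMeasure μ]
    (α₀ ρ₀ : ℝ) (hM2 : CondM2With μ α₀ ρ₀)
    (α : ℝ) (hα : α ∈ Set.Ioc (0 : ℝ) 1) :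
    ∃ C : ℝ, 0 < C ∧ ∀ (ε : ℝ) (r : X → ℝ), 0 < ε → LipschitzWith 1 r →
      (∀ x ∈ measSupport μ, ε ≤ r x ∧ r x ≤ ρ₀) →
      -- the outer approximation
      (∃ g : X × X → ℝ, (∀ p, 0 ≤ g p ∧ g p ≤ 1) ∧ IsHolderF α g ∧
        holderNorm α g ≤ C / ε ∧
        (∀ x z : X, indic (ball x (r x)) z ≤ g (x, z) ∧
          g (x, z) ≤ indic (ball x (r x + ε)) z) ∧
        ∀ x ∈ measSupport μ,
          |(∫ z, g (x, z) ∂μ) - (μ (ball x (r x))).toReal| ≤ C * ε ^ α₀) ∧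
      -- the inner approximation
      (∃ g : X × X → ℝ, (∀ p, 0 ≤ g p ∧ g p ≤ 1) ∧ IsHolderF α g ∧
        holderNorm α g ≤ C / ε ∧
        (∀ x z : X, indic (ball x (r x - ε)) z ≤ g (x, z) ∧
          g (x, z) ≤ indic (ball x (r x)) z) ∧
        ∀ x ∈ measSupport μ,
          |(∫ z, g (x, z) ∂μ) - (μ (ball x (r x))).toReal| ≤ C * ε ^ α₀) := by
  obtain ⟨C₃, hC₃, hann⟩ := annulus_inner_bound μ α₀ ρ₀ hM2
  obtain ⟨hα₀, hρ₀, C₂, hC₂, hM2'⟩ := hM2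
  obtain ⟨hα1, hα2⟩ := hα
  set D : ℝ := Metric.diam (Set.univ : Set (X × X)) with hD
  have hD0 : 0 ≤ D := Metric.diam_nonneg
  set M : ℝ := max 1 (D ^ (1 - α)) with hM
  have hM1 : (1:ℝ) ≤ M := le_max_left _ _
  set Cc : ℝ := ρ₀ + 3 * M + C₂ + C₃ with hCc
  refine ⟨Cc, by nlinarith, ?_⟩
  intro ε r hε hlip hsupp
  obtain ⟨x₀, hx₀⟩ := measSupport_nonempty' μ
  have hερ : ε ≤ ρ₀ := le_trans (hsupp x₀ hx₀).1 (hsupp x₀ hx₀).2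
  have hεα : (0:ℝ) ≤ ε ^ α₀ := Real.rpow_nonneg hε.le _
  -- the general construction
  have key : ∀ R : X → ℝ, LipschitzWith 1 R →
      ∃ g : X × X → ℝ, Continuous g ∧ (∀ p, 0 ≤ g p ∧ g p ≤ 1) ∧ IsHolderF α g ∧
        holderNorm α g ≤ Cc / ε ∧
        (∀ x z : X, (dist z x ≤ R x - ε → g (x, z) = 1) ∧
          (R x ≤ dist z x → g (x, z) = 0)) := by
    intro R hR
    set g : X × X → ℝ := fun p => max 0 (min 1 ((R p.1 - dist p.1 p.2) / ε)) with hg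
    have hRc : Continuous R := hR.continuous
    have hgc : Continuous g := by
      apply Continuous.max continuous_const
      apply Continuous.min continuous_const
      exact ((hRc.comp continuous_fst).sub continuous_dist).div_const ε
    have hb : ∀ p, 0 ≤ g p ∧ g p ≤ 1 :=
      fun p => ⟨le_max_left _ _, max_le zero_le_one (min_le_left _ _)⟩
    have hlipg : ∀ p q : X × X, |g p - g q| ≤ 3 / ε * dist p q := by
      intro p q
      set a := (R p.1 - dist p.1 p.2) / ε with ha
      set b := (R q.1 - dist q.1 q.2) / ε with hbb
      have h1 : |g p - g q| ≤ |a - b| := by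
        calc |g p - g q| = |max (min 1 a) 0 - max (min 1 b) 0| := by
              rw [hg]; simp only [max_comm]; rfl
          _ ≤ |min 1 a - min 1 b| := abs_max_sub_max_le_abs _ _ _
          _ ≤ max |1 - 1| |a - b| := abs_min_sub_min_le_max _ _ _ _
          _ = |a - b| := by simp
      have h2 : |a - b| ≤ 3 / ε * dist p q := by
        have hab : a - b = ((R p.1 - R q.1) - (dist p.1 p.2 - dist q.1 q.2)) / ε := by
          rw [ha, hbb]; field_simp; ring
        have hRd : |R p.1 - R q.1| ≤ dist p.1 q.1 := by
          have := hR.dist_le_mul p.1 q.1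
          rwa [Real.dist_eq, NNReal.coe_one, one_mul] at this
        have hdd : |dist p.1 p.2 - dist q.1 q.2| ≤ dist p.1 q.1 + dist p.2 q.2 := by
          have := dist_dist_dist_le p.1 p.2 q.1 q.2
          rwa [Real.dist_eq] at this
        have hp1 : dist p.1 q.1 ≤ dist p q := by
          rw [Prod.dist_eq]; exact le_max_left _ _
        have hp2 : dist p.2 q.2 ≤ dist p q := by
          rw [Prod.dist_eq]; exact le_max_right _ _
        rw [hab, abs_div, abs_of_pos hε, div_le_iff₀ hε]
        calc |R p.1 - R q.1 - (dist p.1 p.2 - dist q.1 q.2)|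
            ≤ |R p.1 - R q.1| + |dist p.1 p.2 - dist q.1 q.2| := abs_sub _ _
          _ ≤ 3 * dist p q := by linarith
          _ = 3 / ε * dist p q * ε := by field_simp
      exact le_trans h1 h2
    have hHol : ∀ p q : X × X, |g p - g q| ≤ (3 * M / ε) * dist p q ^ α := by
      intro p q
      rcases eq_or_ne p q with rfl | hne
      · simp only [sub_self, abs_zero]
        positivity
      · have hd : 0 < dist p q := dist_pos.mpr hne
        have hdD : dist p q ≤ D := Metric.dist_le_diam_of_mem
          isCompact_univ.isBounded (Set.mem_univ _) (Set.mem_univ _)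
        have hsplit : dist p q = dist p q ^ α * dist p q ^ (1 - α) := by
          rw [← Real.rpow_add hd]
          norm_num
        have hfac : dist p q ^ (1 - α) ≤ M :=
          le_trans (Real.rpow_le_rpow dist_nonneg hdD (by linarith)) (le_max_right _ _)
        calc |g p - g q| ≤ 3 / ε * dist p q := hlipg p q
          _ = 3 / ε * (dist p q ^ α * dist p q ^ (1 - α)) := by rw [← hsplit]
          _ ≤ 3 / ε * (dist p q ^ α * M) := by
              apply mul_le_mul_of_nonneg_left _ (by positivity)
              exact mul_le_mul_of_nonneg_left hfac (Real.rpow_nonneg dist_nonneg _)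
          _ = 3 * M / ε * dist p q ^ α := by ring
    refine ⟨g, hgc, hb, ⟨3 * M / ε, by positivity, hHol⟩, ?_, ?_⟩
    · -- Hölder norm bound
      have hsup : supNorm g ≤ 1 := by
        apply Real.iSup_le _ zero_le_one
        intro p
        exact abs_le.mpr ⟨by linarith [(hb p).1], (hb p).2⟩
      have hsemi : holderSemi α g ≤ 3 * M / ε := by
        apply Real.sSup_le _ (by positivity)
        rintro c ⟨p, q, hne, rfl⟩
        have hd : 0 < dist p q ^ α := Real.rpow_pos_of_pos (dist_pos.mpr hne) _
        rw [div_le_iff₀ hd]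
        exact hHol p q
      have hfin : (1:ℝ) + 3 * M / ε ≤ Cc / ε := by
        have heq : (1:ℝ) + 3 * M / ε = (ε + 3 * M) / ε := by field_simp
        rw [heq]
        gcongr
        rw [hCc]
        linarith
      calc holderNorm α g = supNorm g + holderSemi α g := rfl
        _ ≤ 1 + 3 * M / ε := by linarith
        _ ≤ Cc / ε := hfin
    · -- pointwise values
      intro x z
      constructor
      · intro hz
        have h1 : (1:ℝ) ≤ (R x - dist x z) / ε := by
          rw [le_div_iff₀ hε, one_mul, dist_comm x z]
          linarith
        simp only [hg]
        rw [min_eq_left h1, max_eq_right zero_le_one]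
      · intro hz
        have h1 : (R x - dist x z) / ε ≤ 0 := by
          apply div_nonpos_of_nonpos_of_nonneg _ hε.le
          rw [dist_comm x z]
          linarith
        simp only [hg]
        exact max_eq_left (le_trans (min_le_right _ _) h1)
  constructor
  · -- outer approximation
    have hRlip : LipschitzWith 1 (fun x => r x + ε) := by
      apply LipschitzWith.of_dist_le_mul
      intro x y
      rw [Real.dist_eq, add_sub_add_right_eq_sub, ← Real.dist_eq]
      exact hlip.dist_le_mul x y
    obtain ⟨g, hgc, hb, hhol, hnorm, hval⟩ := key _ hRlip
    have hind : ∀ x z : X, indic (ball x (r x)) z ≤ g (x, z) ∧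
        g (x, z) ≤ indic (ball x (r x + ε)) z := by
      intro x z
      constructor
      · by_cases hz : z ∈ ball x (r x)
        · have hg1 : g (x, z) = 1 := (hval x z).1
            (by show dist z x ≤ r x + ε - ε; linarith [mem_ball.mp hz])
          simp only [indic, Set.indicator_of_mem hz, hg1, le_refl]
        · simp only [indic, Set.indicator_of_notMem hz]
          exact (hb (x, z)).1
      · by_cases hz : z ∈ ball x (r x + ε)
        · simp only [indic, Set.indicator_of_mem hz]
          exact (hb (x, z)).2
        · have hg0 : g (x, z) = 0 := (hval x z).2
            (by show r x + ε ≤ dist z x; exact not_lt.mp (fun h => hz (mem_ball.mpr h)))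
          simp only [indic, Set.indicator_of_notMem hz, hg0, le_refl]
    refine ⟨g, hb, hhol, hnorm, hind, ?_⟩
    intro x hx
    obtain ⟨hεr, hrρ⟩ := hsupp x hx
    have hint : Integrable (fun z => g (x, z)) μ :=
      (hgc.comp (Continuous.prodMk_right x)).integrable_of_hasCompactSupport
        (HasCompactSupport.of_compactSpace _)
    have hind1 : Integrable (fun z => indic (ball x (r x)) z) μ := by
      simpa [indic] using (integrable_const (1:ℝ)).indicator measurableSet_ball
    have hind2 : Integrable (fun z => indic (ball x (r x + ε)) z) μ := by
      simpa [indic] using (integrable_const (1:ℝ)).indicator measurableSet_ball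
    have hieq1 : ∫ z, indic (ball x (r x)) z ∂μ = (μ (ball x (r x))).toReal := by
      simp only [indic]
      exact integral_indicator_one measurableSet_ball
    have hieq2 : ∫ z, indic (ball x (r x + ε)) z ∂μ = (μ (ball x (r x + ε))).toReal := by
      simp only [indic]
      exact integral_indicator_one measurableSet_ball
    have hlow : (μ (ball x (r x))).toReal ≤ ∫ z, g (x, z) ∂μ := by
      rw [← hieq1]
      exact integral_mono hind1 hint (fun z => (hind x z).1)
    have hup : (∫ z, g (x, z) ∂μ) ≤ (μ (ball x (r x + ε))).toReal := by
      rw [← hieq2]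
      exact integral_mono hint hind2 (fun z => (hind x z).2)
    have hsub : ball x (r x) ⊆ ball x (r x + ε) := ball_subset_ball (by linarith)
    have hmono : μ (ball x (r x)) ≤ μ (ball x (r x + ε)) := measure_mono hsub
    have hdiff : (μ (ball x (r x + ε))).toReal - (μ (ball x (r x))).toReal ≤ C₂ * ε ^ α₀ := by
      have h1 : μ (ball x (r x + ε)) - μ (ball x (r x)) ≤ ENNReal.ofReal (C₂ * ε ^ α₀) := by
        rw [← measure_diff hsub measurableSet_ball.nullMeasurableSet (measure_ne_top μ _)]
        exact hM2' x ε (r x) hε hεr hrρ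
      have h2 := ENNReal.toReal_le_of_le_ofReal (mul_nonneg hC₂.le hεα) h1
      rwa [ENNReal.toReal_sub_of_le hmono (measure_ne_top μ _)] at h2
    have hCle : C₂ * ε ^ α₀ ≤ Cc * ε ^ α₀ := by
      apply mul_le_mul_of_nonneg_right _ hεα
      rw [hCc]; linarith
    rw [abs_le]
    constructor <;> linarith
  · -- inner approximation
    obtain ⟨g, hgc, hb, hhol, hnorm, hval⟩ := key r hlip
    have hind : ∀ x z : X, indic (ball x (r x - ε)) z ≤ g (x, z) ∧
        g (x, z) ≤ indic (ball x (r x)) z := by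
      intro x z
      constructor
      · by_cases hz : z ∈ ball x (r x - ε)
        · have hg1 : g (x, z) = 1 := (hval x z).1 (le_of_lt (mem_ball.mp hz))
          simp only [indic, Set.indicator_of_mem hz, hg1, le_refl]
        · simp only [indic, Set.indicator_of_notMem hz]
          exact (hb (x, z)).1
      · by_cases hz : z ∈ ball x (r x)
        · simp only [indic, Set.indicator_of_mem hz]
          exact (hb (x, z)).2
        · have hg0 : g (x, z) = 0 := (hval x z).2
            (not_lt.mp (fun h => hz (mem_ball.mpr h)))
          simp only [indic, Set.indicator_of_notMem hz, hg0, le_refl]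
    refine ⟨g, hb, hhol, hnorm, hind, ?_⟩
    intro x hx
    obtain ⟨hεr, hrρ⟩ := hsupp x hx
    have hint : Integrable (fun z => g (x, z)) μ :=
      (hgc.comp (Continuous.prodMk_right x)).integrable_of_hasCompactSupport
        (HasCompactSupport.of_compactSpace _)
    have hindc : Integrable (fun z => (closedBall x (r x - ε)).indicator
        (fun _ => (1:ℝ)) z) μ := by
      simpa using (integrable_const (1:ℝ)).indicator measurableSet_closedBall
    have hind2 : Integrable (fun z => indic (ball x (r x)) z) μ := by
      simpa [indic] using (integrable_const (1:ℝ)).indicator measurableSet_ball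
    have hieqc : ∫ z, (closedBall x (r x - ε)).indicator (fun _ => (1:ℝ)) z ∂μ
        = (μ (closedBall x (r x - ε))).toReal := by
      exact integral_indicator_one measurableSet_closedBall
    have hieq2 : ∫ z, indic (ball x (r x)) z ∂μ = (μ (ball x (r x))).toReal := by
      simp only [indic]
      exact integral_indicator_one measurableSet_ball
    have hptc : ∀ z, (closedBall x (r x - ε)).indicator (fun _ => (1:ℝ)) z ≤ g (x, z) := by
      intro z
      by_cases hz : z ∈ closedBall x (r x - ε)
      · have hg1 : g (x, z) = 1 := (hval x z).1 (mem_closedBall.mp hz)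
        rw [Set.indicator_of_mem hz, hg1]
      · rw [Set.indicator_of_notMem hz]
        exact (hb (x, z)).1
    have hlow : (μ (closedBall x (r x - ε))).toReal ≤ ∫ z, g (x, z) ∂μ := by
      rw [← hieqc]
      exact integral_mono hindc hint hptc
    have hup : (∫ z, g (x, z) ∂μ) ≤ (μ (ball x (r x))).toReal := by
      rw [← hieq2]
      exact integral_mono hint hind2 (fun z => (hind x z).2)
    have hsub : closedBall x (r x - ε) ⊆ ball x (r x) :=
      closedBall_subset_ball (by linarith)
    have hmono : μ (closedBall x (r x - ε)) ≤ μ (ball x (r x)) := measure_mono hsub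
    have hdiff : (μ (ball x (r x))).toReal - (μ (closedBall x (r x - ε))).toReal
        ≤ C₃ * ε ^ α₀ := by
      have h1 : μ (ball x (r x)) - μ (closedBall x (r x - ε))
          ≤ ENNReal.ofReal (C₃ * ε ^ α₀) := by
        rw [← measure_diff hsub measurableSet_closedBall.nullMeasurableSet (measure_ne_top μ _)]
        exact hann x ε (r x) hε hεr hrρ
      have h2 := ENNReal.toReal_le_of_le_ofReal (mul_nonneg hC₃.le hεα) h1
      rwa [ENNReal.toReal_sub_of_le hmono (measure_ne_top μ _)] at h2
    have hCle : C₃ * ε ^ α₀ ≤ Cc * ε ^ α₀ := by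
      apply mul_le_mul_of_nonneg_right _ hεα
      rw [hCc]; linarith
    rw [abs_le]
    constructor <;> linarith

end Paper
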